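/- Let (Ω, F, P) be a probability space with a filtration (F_n)_{n∈ℕ}. Let f : ℝ → ℝ be continuously differentiable with Lipschitz derivative f′, such that f′ has a unique zero θ* (the unique minimizer of f), and suppose there exist L > 0 and r > 0 with f′(θ) > r for all θ > L and f′(θ) < −r for all θ < −L. Let (a_n) and (δ_n) be positive sequences such that (a_n), (δ_n) and (a_n/δ_n) are nonincreasing, δ_n → 0, ∑_n a_n = ∞, and ∑_n a_n²/δ_n² < ∞. Let (θ_n), (b_n), (η_n), (Δ_n) be real-valued random sequences such that θ_n and b_n are F_n-measurable, η_n and Δ_n are F_{n+1}-measurable, and θ_{n+1} = θ_n − a_n (f′(θ_n) + b_n + η_n + Δ_n) for all n. Assume: (i) there is a constant C₀ with |b_n| ≤ C₀ δ_n² almost surely for all n; (ii) each η_n is square-integrable with E[η_n | F_n] = 0 and δ_n² E[η_n² | F_n] ≤ σ² almost surely for some constant σ; (iii) almost surely, Δ_n = 0 for all sufficiently large n. Then θ_n converges to θ* almost surely. -/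

import Mathlib

open MeasureTheory Filter

set_option maxHeartbeats 1000000 in
/-- Upper eventual bound for a perturbed gradient-descent-type recursion. -/
lemma kw_eventually_le (g : ℝ → ℝ) (K : NNReal) (hLip : LipschitzWith K g)
    (xs L r : ℝ) (hr : 0 < r) (hg0 : g xs = 0)
    (hgpos : ∀ x, xs < x → 0 < g x)
    (hdr : ∀ x, L < x → r < g x)
    (a D c : ℕ → ℝ) (ha_pos : ∀ n, 0 < a n)
    (ha0 : Tendsto a atTop (nhds 0)) (ha_div : ¬ Summable a)
    (hD : Tendsto D atTop (nhds 0)) (hc : Tendsto c atTop (nhds 0))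
    (y : ℕ → ℝ) (hrec : ∀ n, y (n + 1) = y n - a n * (g (y n + D n) + c n))
    (ε : ℝ) (hε : 0 < ε) :
    ∀ᶠ n in atTop, y n ≤ xs + ε := by
  -- a positive lower bound for g on [xs + ε/2, ∞)
  set R := max (L + 1) (xs + ε / 2) with hR
  have hmem : xs + ε / 2 ∈ Set.Icc (xs + ε / 2) R := ⟨le_refl _, le_max_right _ _⟩
  obtain ⟨z, hz, hzmin⟩ := isCompact_Icc.exists_isMinOn ⟨_, hmem⟩ hLip.continuous.continuousOn
  set m := min (g z) r with hm_def
  have hm_pos : 0 < m := lt_min (hgpos z (by nlinarith [hz.1])) hr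
  have hm : ∀ x, xs + ε / 2 ≤ x → m ≤ g x := by
    intro x hx
    rcases le_or_gt x R with h | h
    · exact le_trans (min_le_left _ _) (isMinOn_iff.mp hzmin x ⟨hx, h⟩)
    · have hL : L < x := by
        have := le_max_left (L + 1) (xs + ε / 2)
        rw [← hR] at this; linarith
      exact le_trans (min_le_right _ _) (hdr x hL).le
  -- eventual smallness conditions
  have h1 : ∀ᶠ n in atTop, |D n| < ε / 8 := by
    have := hD.eventually (eventually_abs_sub_lt 0 (by linarith : (0:ℝ) < ε / 8))
    simpa using this
  have h2 : ∀ᶠ n in atTop, |c n| < m / 2 := by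
    have := hc.eventually (eventually_abs_sub_lt 0 (by linarith : (0:ℝ) < m / 2))
    simpa using this
  have h3 : ∀ᶠ n in atTop, a n * (K : ℝ) < 1 := by
    have ht : Tendsto (fun n => a n * (K : ℝ)) atTop (nhds 0) := by
      simpa using ha0.mul_const (K : ℝ)
    have := ht.eventually (eventually_abs_sub_lt 0 (by norm_num : (0:ℝ) < 1))
    filter_upwards [this] with n hn
    have := (abs_lt.1 (by simpa only [sub_zero] using hn)).2
    linarith
  have h4 : ∀ᶠ n in atTop, a n * (m / 2) < ε / 8 := by
    have ht : Tendsto (fun n => a n * (m / 2)) atTop (nhds 0) := by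
      simpa using ha0.mul_const (m / 2)
    have := ht.eventually (eventually_abs_sub_lt 0 (by linarith : (0:ℝ) < ε / 8))
    filter_upwards [this] with n hn
    have := (abs_lt.1 (by simpa only [sub_zero] using hn)).2
    linarith
  obtain ⟨N, hN⟩ := eventually_atTop.1 (((h1.and h2).and (h3.and h4)))
  -- descent while above xs + 3ε/4
  have hdesc : ∀ n, N ≤ n → xs + 3 * ε / 4 ≤ y n → y (n + 1) ≤ y n - a n * (m / 2) := by
    intro n hn hy
    obtain ⟨⟨hDn, hcn⟩, _, _⟩ := hN n hn
    have hDn' := abs_lt.1 hDn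
    have hgge : m ≤ g (y n + D n) := hm _ (by linarith)
    have hcge : -(m / 2) ≤ c n := by have := abs_lt.1 hcn; linarith
    have hsum : m / 2 ≤ g (y n + D n) + c n := by linarith
    rw [hrec n]
    have := mul_le_mul_of_nonneg_left hsum (ha_pos n).le
    linarith
  -- the sequence must eventually drop below xs + 3ε/4
  have hex : ∃ n₀, N ≤ n₀ ∧ y n₀ < xs + 3 * ε / 4 := by
    by_contra hcon
    push_neg at hcon
    have hsum : ∀ k, y (N + k) ≤ y N - m / 2 * ∑ i ∈ Finset.range k, a (N + i) := by
      intro k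
      induction k with
      | zero => simp
      | succ k ih =>
        have h := hdesc (N + k) (Nat.le_add_right _ _) (hcon _ (Nat.le_add_right _ _))
        rw [Finset.sum_range_succ]
        have heq : N + (k + 1) = (N + k) + 1 := rfl
        rw [heq]
        nlinarith [h, ih]
    have hpt : Tendsto (fun k => ∑ i ∈ Finset.range k, a (N + i)) atTop atTop := by
      have hns : ¬ Summable (fun i => a (N + i)) := fun hs =>
        ha_div ((summable_nat_add_iff N).1 (by simpa [Nat.add_comm] using hs))
      exact (not_summable_iff_tendsto_nat_atTop_of_nonneg (fun i => (ha_pos _).le)).1 hns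
    set B := (y N - (xs + 3 * ε / 4)) / (m / 2) with hB
    obtain ⟨k, hk⟩ := (hpt.eventually_ge_atTop (B + 1)).exists
    have h5 : m / 2 * B = y N - (xs + 3 * ε / 4) := by
      rw [hB]; field_simp
    have h6 := mul_le_mul_of_nonneg_left hk (by positivity : (0:ℝ) ≤ m / 2)
    have h7 := hsum k
    have h8 := hcon (N + k) (Nat.le_add_right _ _)
    nlinarith
  -- invariance of { y ≤ xs + ε }
  have hinv : ∀ n, N ≤ n → y n ≤ xs + ε → y (n + 1) ≤ xs + ε := by
    intro n hn hy
    obtain ⟨⟨hDn, hcn⟩, hK1, hm8⟩ := hN n hn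
    have hDn' := abs_lt.1 hDn
    have hcn' := abs_lt.1 hcn
    rcases le_or_gt (xs + 3 * ε / 4) (y n) with hcase | hcase
    · have h := hdesc n hn hcase
      nlinarith [ha_pos n, hm_pos]
    · rcases le_or_gt xs (y n + D n) with hcase2 | hcase2
      · have hg_nonneg : 0 ≤ g (y n + D n) := by
          rcases eq_or_lt_of_le hcase2 with h | h
          · rw [← h, hg0]
          · exact (hgpos _ h).le
        rw [hrec n]
        have h2 : -(a n * (g (y n + D n) + c n)) ≤ a n * (m / 2) := by
          nlinarith [ha_pos n, hcn'.1, hg_nonneg]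
        linarith
      · -- y n + D n < xs: use the Lipschitz bound to control overshoot
        have hK' : -g (y n + D n) ≤ (K : ℝ) * (xs - (y n + D n)) := by
          have hd := hLip.dist_le_mul xs (y n + D n)
          rw [Real.dist_eq, Real.dist_eq] at hd
          have h1 := le_trans (le_abs_self (g xs - g (y n + D n))) hd
          have h2 : |xs - (y n + D n)| = xs - (y n + D n) := abs_of_pos (by linarith)
          rw [h2] at h1
          rw [hg0] at h1
          linarith
        have hstep : y (n + 1) ≤ y n + a n * (K : ℝ) * (xs - y n - D n) + a n * (m / 2) := by
          rw [hrec n]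
          have hb1 : a n * (-g (y n + D n)) ≤ a n * ((K : ℝ) * (xs - (y n + D n))) :=
            mul_le_mul_of_nonneg_left hK' (ha_pos n).le
          have hb2 : a n * (-c n) ≤ a n * (m / 2) :=
            mul_le_mul_of_nonneg_left (by linarith [hcn'.1]) (ha_pos n).le
          linarith [hb1, hb2]
        set t := a n * (K : ℝ) with htdef
        have ht0 : (0:ℝ) ≤ t := mul_nonneg (ha_pos n).le K.coe_nonneg
        have ht1 : t ≤ 1 := hK1.le
        have hq : (0:ℝ) ≤ xs - y n - D n := by linarith
        have hA : t * (xs - y n - D n) ≤ xs - y n - D n := by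
          have h := mul_nonneg (by linarith : (0:ℝ) ≤ 1 - t) hq
          nlinarith [h]
        linarith [hstep, hDn'.1, hm8, hε]
  obtain ⟨n₀, hn₀N, hy₀⟩ := hex
  have hall : ∀ k, y (n₀ + k) ≤ xs + ε := by
    intro k
    induction k with
    | zero => simpa using le_trans hy₀.le (by linarith)
    | succ k ih => exact hinv (n₀ + k) (le_trans hn₀N (Nat.le_add_right _ _)) ih
  rw [eventually_atTop]
  refine ⟨n₀, fun n hn => ?_⟩
  have := hall (n - n₀)
  rwa [Nat.add_sub_cancel' hn] at this

set_option maxHeartbeats 1000000 in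
/-- Deterministic convergence of the perturbed recursion. -/
lemma kw_det (g : ℝ → ℝ) (K : NNReal) (hLip : LipschitzWith K g)
    (xs L r : ℝ) (hr : 0 < r)
    (hzero : ∀ x, g x = 0 ↔ x = xs)
    (hdr : ∀ x, L < x → r < g x) (hdl : ∀ x, x < -L → g x < -r)
    (a D c : ℕ → ℝ) (ha_pos : ∀ n, 0 < a n)
    (ha0 : Tendsto a atTop (nhds 0)) (ha_div : ¬ Summable a)
    (hD : Tendsto D atTop (nhds 0)) (hc : Tendsto c atTop (nhds 0))
    (y : ℕ → ℝ) (hrec : ∀ n, y (n + 1) = y n - a n * (g (y n + D n) + c n)) :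
    Tendsto y atTop (nhds xs) := by
  have hg0 : g xs = 0 := (hzero xs).2 rfl
  have hLc : Continuous g := hLip.continuous
  have hgpos : ∀ x, xs < x → 0 < g x := by
    intro x hx
    by_contra hcon
    push_neg at hcon
    rcases eq_or_lt_of_le hcon with h | h
    · exact absurd ((hzero x).1 h) (by linarith)
    · have hxL : x ≤ L := by
        by_contra hxL
        push_neg at hxL
        linarith [hdr x hxL]
      have hgl : r < g (L + 1) := hdr (L + 1) (by linarith)
      have h0 : (0:ℝ) ∈ Set.Ioo (g x) (g (L + 1)) := ⟨h, by linarith⟩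
      have := intermediate_value_Ioo (by linarith : x ≤ L + 1) hLc.continuousOn h0
      obtain ⟨z, hz, hz0⟩ := this
      have := (hzero z).1 hz0
      linarith [hz.1]
  have hgneg : ∀ x, x < xs → g x < 0 := by
    intro x hx
    by_contra hcon
    push_neg at hcon
    rcases eq_or_lt_of_le hcon with h | h
    · exact absurd ((hzero x).1 h.symm) (by linarith)
    · have hxL : -L ≤ x := by
        by_contra hxL
        push_neg at hxL
        linarith [hdl x hxL]
      have hgl : g (-L - 1) < -r := hdl (-L - 1) (by linarith)
      have h0 : (0:ℝ) ∈ Set.Ioo (g (-L - 1)) (g x) := ⟨by linarith, h⟩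
      have := intermediate_value_Ioo (by linarith : -L - 1 ≤ x) hLc.continuousOn h0
      obtain ⟨z, hz, hz0⟩ := this
      have := (hzero z).1 hz0
      linarith [hz.2]
  have hup : ∀ ε, 0 < ε → ∀ᶠ n in atTop, y n ≤ xs + ε := fun ε hε =>
    kw_eventually_le g K hLip xs L r hr hg0 hgpos hdr a D c ha_pos ha0 ha_div hD hc y hrec ε hε
  have hLip' : LipschitzWith K (fun x => -g (-x)) := by
    apply LipschitzWith.of_dist_le_mul
    intro x y'
    have hd := hLip.dist_le_mul (-x) (-y')
    rw [Real.dist_eq, Real.dist_eq] at hd ⊢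
    calc |-g (-x) - -g (-y')| = |g (-x) - g (-y')| := by rw [← abs_neg]; ring_nf
    _ ≤ (K : ℝ) * |-x - -y'| := hd
    _ = (K : ℝ) * |x - y'| := by rw [← abs_neg]; ring_nf
  have hlo : ∀ ε, 0 < ε → ∀ᶠ n in atTop, xs - ε ≤ y n := by
    intro ε hε
    have h2 := kw_eventually_le (fun x => -g (-x)) K hLip' (-xs) L r hr (by simp [hg0])
      (fun x hx => by have := hgneg (-x) (by linarith); simpa using by linarith)
      (fun x hx => by have := hdl (-x) (by linarith); simpa using by linarith)
      a (fun n => -D n) (fun n => -c n) ha_pos ha0 ha_div (by simpa using hD.neg)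
      (by simpa using hc.neg) (fun n => -y n)
      (fun n => by
        show -y (n + 1) = -y n - a n * (-g (-(-y n + -D n)) + -c n)
        have harg : -(-y n + -D n) = y n + D n := by ring
        rw [harg, hrec n]; ring)
      ε hε
    filter_upwards [h2] with n hn
    have hn' : -y n ≤ -xs + ε := hn
    linarith
  rw [tendsto_order]
  constructor
  · intro b hb
    filter_upwards [hlo ((xs - b) / 2) (by linarith)] with n hn
    linarith
  · intro b hb
    filter_upwards [hup ((b - xs) / 2) (by linarith)] with n hn
    linarith

set_option maxHeartbeats 1000000 in
/-- Almost-sure convergence of the non-stationary Kiefer–Wolfowitz recursion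
`θ_{n+1} = θ_n − a_n (f′(θ_n) + b_n + η_n + Δ_n)` to the unique zero `θ*` of `f′`. -/
theorem nonstationary_kw_as_convergence
    {Ω : Type*} {m0 : MeasurableSpace Ω} {P : Measure Ω} [IsProbabilityMeasure P]
    (F : Filtration ℕ m0)
    (f f' : ℝ → ℝ)
    (hderiv : ∀ x, HasDerivAt f (f' x) x)
    (hcont : Continuous f')
    (hLip : ∃ K : NNReal, LipschitzWith K f')
    (θstar : ℝ)
    (hzero : ∀ θ, f' θ = 0 ↔ θ = θstar)
    (L r : ℝ) (hL : 0 < L) (hr : 0 < r)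
    (hdrift_pos : ∀ θ, L < θ → r < f' θ)
    (hdrift_neg : ∀ θ, θ < -L → f' θ < -r)
    (a δ : ℕ → ℝ)
    (ha_pos : ∀ n, 0 < a n) (hδ_pos : ∀ n, 0 < δ n)
    (ha_anti : Antitone a) (hδ_anti : Antitone δ)
    (haδ_anti : Antitone (fun n => a n / δ n))
    (hδ_lim : Tendsto δ atTop (nhds 0))
    (ha_div : ¬ Summable a)
    (ha2_sum : Summable (fun n => (a n) ^ 2 / (δ n) ^ 2))
    (θseq b η Δ : ℕ → Ω → ℝ)
    (hθ_meas : ∀ n, Measurable[F n] (θseq n))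
    (hb_meas : ∀ n, Measurable[F n] (b n))
    (hη_meas : ∀ n, Measurable[F (n + 1)] (η n))
    (hΔ_meas : ∀ n, Measurable[F (n + 1)] (Δ n))
    (hrec : ∀ n, ∀ ω,
      θseq (n + 1) ω = θseq n ω - a n * (f' (θseq n ω) + b n ω + η n ω + Δ n ω))
    (C₀ : ℝ)
    (hb_bound : ∀ n, ∀ᵐ ω ∂P, |b n ω| ≤ C₀ * (δ n) ^ 2)
    (hη_sq : ∀ n, Integrable (fun ω => (η n ω) ^ 2) P)
    (hη_cond : ∀ n, P[η n | F n] =ᵐ[P] 0)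
    (σ : ℝ)
    (hη_var : ∀ n, ∀ᵐ ω ∂P,
      (δ n) ^ 2 * (P[(fun ω' => (η n ω') ^ 2) | F n]) ω ≤ σ ^ 2)
    (hΔ_event : ∀ᵐ ω ∂P, ∀ᶠ n in atTop, Δ n ω = 0) :
    ∀ᵐ ω ∂P, Tendsto (fun n => θseq n ω) atTop (nhds θstar) := by
  obtain ⟨K, hLipK⟩ := hLip
  -- step sizes tend to zero
  have ha0 : Tendsto a atTop (nhds 0) := by
    have hq2 : Tendsto (fun n => (a n / δ n) ^ 2) atTop (nhds 0) := by
      have := ha2_sum.tendsto_atTop_zero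
      simpa [div_pow] using this
    have hq0 : Tendsto (fun n => a n / δ n) atTop (nhds 0) := by
      have hs : Tendsto (fun n => Real.sqrt ((a n / δ n) ^ 2)) atTop (nhds 0) := by
        have := (Real.continuous_sqrt.tendsto 0).comp hq2
        simpa [Function.comp_def] using this
      have heq : ∀ n, Real.sqrt ((a n / δ n) ^ 2) = a n / δ n := fun n => by
        rw [Real.sqrt_sq_eq_abs, abs_of_pos (div_pos (ha_pos n) (hδ_pos n))]
      simpa [heq] using hs
    have := hq0.mul hδ_lim
    have heq : ∀ n, a n / δ n * δ n = a n := fun n => div_mul_cancel₀ _ (hδ_pos n).ne'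
    simpa [heq] using this
  -- the martingale of partial sums of a_k η_k
  set M : ℕ → Ω → ℝ := fun n ω => ∑ k ∈ Finset.range n, a k * η k ω with hM_def
  have hηm0 : ∀ k, Measurable (η k) := fun k => (hη_meas k).mono (F.le _) le_rfl
  have hMmeasF : ∀ n, StronglyMeasurable[F n] (M n) := by
    intro n
    apply Measurable.stronglyMeasurable
    apply Finset.measurable_sum
    intro k hk
    have hk' : k + 1 ≤ n := Finset.mem_range.1 hk
    exact (measurable_const.mul ((hη_meas k).mono (F.mono hk') le_rfl))
  have hη2 : ∀ k, MemLp (η k) 2 P := fun k =>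
    (memLp_two_iff_integrable_sq (hηm0 k).aestronglyMeasurable).2 (hη_sq k)
  have hηint : ∀ k, Integrable (η k) P := fun k => (hη2 k).integrable one_le_two
  have hM2 : ∀ n, MemLp (M n) 2 P := by
    intro n
    apply memLp_finset_sum
    intro k _
    exact (hη2 k).const_mul (a k)
  have hMint : ∀ n, Integrable (M n) P := fun n => (hM2 n).integrable one_le_two
  have hMsq_int : ∀ n, Integrable (fun ω => (M n ω) ^ 2) P := fun n =>
    (memLp_two_iff_integrable_sq (hM2 n).aestronglyMeasurable).1 (hM2 n)
  have hMsucc : ∀ n, M (n + 1) = M n + (a n) • η n := by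
    intro n
    funext ω
    simp [hM_def, Finset.sum_range_succ, smul_eq_mul]
  have hmart : Martingale M F P := by
    apply martingale_nat (fun n => (hMmeasF n)) hMint
    intro n
    have h1 : P[M (n + 1)|F n] =ᵐ[P] P[M n|F n] + P[(a n) • η n|F n] := by
      rw [hMsucc n]
      exact condExp_add (hMint n) ((hηint n).smul (a n)) _
    have h2 : P[M n|F n] = M n :=
      condExp_of_stronglyMeasurable (F.le n) (hMmeasF n) (hMint n)
    have h3 : P[(a n) • η n|F n] =ᵐ[P] (0 : Ω → ℝ) := by
      refine (condExp_smul (a n) (η n) _ : _).trans ?_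
      filter_upwards [hη_cond n] with ω hω
      simp [hω]
    refine EventuallyEq.symm (h1.trans ?_)
    rw [h2]
    filter_upwards [h3] with ω hω
    simp [hω]
  -- second moments
  have hvar : ∀ n, ∫ ω, (η n ω) ^ 2 ∂P ≤ σ ^ 2 / (δ n) ^ 2 := by
    intro n
    have hδ2 : (0:ℝ) < (δ n) ^ 2 := pow_pos (hδ_pos n) 2
    have h1 : ∫ ω, (η n ω) ^ 2 ∂P = ∫ ω, (P[(fun ω' => (η n ω') ^ 2)|F n]) ω ∂P :=
      (integral_condExp (F.le n)).symm
    rw [h1]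
    have h2 : ∀ᵐ ω ∂P, (P[(fun ω' => (η n ω') ^ 2)|F n]) ω ≤ σ ^ 2 / (δ n) ^ 2 := by
      filter_upwards [hη_var n] with ω hω
      rw [le_div_iff₀ hδ2]
      linarith [hω]
    calc ∫ ω, (P[(fun ω' => (η n ω') ^ 2)|F n]) ω ∂P
        ≤ ∫ _, σ ^ 2 / (δ n) ^ 2 ∂P := integral_mono_ae integrable_condExp
          (integrable_const _) h2
      _ = σ ^ 2 / (δ n) ^ 2 := by simp
  -- orthogonality: ∫ M n · η n = 0
  have hprod_int : ∀ n, Integrable (M n * η n) P := by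
    intro n
    have hmeas : AEStronglyMeasurable (M n * η n) P := by
      exact (((hMmeasF n).measurable.mono (F.le n) le_rfl).mul (hηm0 n)).aestronglyMeasurable
    apply Integrable.mono' (((hMsq_int n).add (hη_sq n)).div_const 2) hmeas
    filter_upwards with ω
    have h := sq_nonneg (|M n ω| - |η n ω|)
    simp only [Pi.mul_apply, Pi.add_apply]
    have h2 : ‖M n ω * η n ω‖ = |M n ω| * |η n ω| := by
      rw [Real.norm_eq_abs, abs_mul]
    rw [h2]
    have := sq_abs (M n ω)
    have := sq_abs (η n ω)
    nlinarith
  have horth : ∀ n, ∫ ω, M n ω * η n ω ∂P = 0 := by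
    intro n
    have hpull : P[M n * η n|F n] =ᵐ[P] M n * P[η n|F n] :=
      condExp_mul_of_stronglyMeasurable_left (hMmeasF n) (hprod_int n) (hηint n)
    have hz : P[M n * η n|F n] =ᵐ[P] (0 : Ω → ℝ) := by
      refine hpull.trans ?_
      filter_upwards [hη_cond n] with ω hω
      simp [hω]
    have h1 : ∫ ω, M n ω * η n ω ∂P = ∫ ω, (P[M n * η n|F n]) ω ∂P :=
      (integral_condExp (F.le n)).symm
    rw [h1, integral_congr_ae hz]
    simp
  -- second moment of M n is bounded
  set T : ℝ := ∑' n, (a n) ^ 2 / (δ n) ^ 2 with hT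
  have hσ2 : (0:ℝ) ≤ σ ^ 2 := sq_nonneg σ
  have hMsq_bound : ∀ n, ∫ ω, (M n ω) ^ 2 ∂P ≤ σ ^ 2 * T := by
    have hMsq_partial : ∀ n, ∫ ω, (M n ω) ^ 2 ∂P
        ≤ σ ^ 2 * ∑ k ∈ Finset.range n, (a k) ^ 2 / (δ k) ^ 2 := by
      intro n
      induction n with
      | zero => simp [hM_def]
      | succ n ih =>
        have hexp : ∀ ω, (M (n + 1) ω) ^ 2
            = (M n ω) ^ 2 + 2 * a n * (M n ω * η n ω) + (a n) ^ 2 * (η n ω) ^ 2 := by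
          intro ω
          rw [hMsucc n]
          simp only [Pi.add_apply, Pi.smul_apply, smul_eq_mul]
          ring
        have hint2 : Integrable (fun ω => 2 * a n * (M n ω * η n ω)) P :=
          ((hprod_int n).const_mul _)
        have hint3 : Integrable (fun ω => (a n) ^ 2 * (η n ω) ^ 2) P :=
          ((hη_sq n).const_mul _)
        have hint12 : Integrable (fun ω => (M n ω) ^ 2 + 2 * a n * (M n ω * η n ω)) P :=
          (hMsq_int n).add hint2
        have h1 : ∫ ω, (M (n + 1) ω) ^ 2 ∂P
            = ∫ ω, (M n ω) ^ 2 ∂P + 2 * a n * ∫ ω, M n ω * η n ω ∂P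
              + (a n) ^ 2 * ∫ ω, (η n ω) ^ 2 ∂P := by
          simp_rw [hexp]
          rw [integral_add hint12 hint3, integral_add (hMsq_int n) hint2,
            integral_const_mul, integral_const_mul]
        rw [h1, horth n, Finset.sum_range_succ, mul_add]
        have h2 : (a n) ^ 2 * ∫ ω, (η n ω) ^ 2 ∂P ≤ σ ^ 2 * ((a n) ^ 2 / (δ n) ^ 2) := by
          have := mul_le_mul_of_nonneg_left (hvar n) (by positivity : (0:ℝ) ≤ (a n) ^ 2)
          calc (a n) ^ 2 * ∫ ω, (η n ω) ^ 2 ∂P ≤ (a n) ^ 2 * (σ ^ 2 / (δ n) ^ 2) := this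
            _ = σ ^ 2 * ((a n) ^ 2 / (δ n) ^ 2) := by ring
        linarith
    intro n
    refine le_trans (hMsq_partial n) (mul_le_mul_of_nonneg_left ?_ hσ2)
    exact ha2_sum.sum_le_tsum _ (fun k _ => by positivity)
  -- L¹ bound
  set Rb : ℝ := (σ ^ 2 * T + 1) / 2 with hRb
  have hbdd : ∀ n, eLpNorm (M n) 1 P ≤ ENNReal.ofReal Rb := by
    intro n
    rw [eLpNorm_one_eq_lintegral_enorm,
      ← ofReal_integral_norm_eq_lintegral_enorm (hMint n)]
    apply ENNReal.ofReal_le_ofReal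
    have h1 : ∫ ω, ‖M n ω‖ ∂P ≤ ∫ ω, ((M n ω) ^ 2 + 1) / 2 ∂P := by
      apply integral_mono (hMint n).norm (((hMsq_int n).add (integrable_const 1)).div_const 2)
      intro ω
      show ‖M n ω‖ ≤ ((M n ω) ^ 2 + 1) / 2
      have := sq_nonneg (|M n ω| - 1)
      rw [Real.norm_eq_abs]
      nlinarith [sq_abs (M n ω)]
    have h2 : ∫ ω, ((M n ω) ^ 2 + 1) / 2 ∂P = (∫ ω, (M n ω) ^ 2 ∂P + 1) / 2 := by
      rw [integral_div (2:ℝ) (fun ω => (M n ω) ^ 2 + 1),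
        integral_add (hMsq_int n) (integrable_const 1)]
      simp
    rw [h2] at h1
    have h3 := hMsq_bound n
    rw [hRb]
    linarith
  have hconv := hmart.submartingale.exists_ae_tendsto_of_bdd hbdd
  -- combine all a.e. events
  have hb_all : ∀ᵐ ω ∂P, ∀ n, |b n ω| ≤ C₀ * (δ n) ^ 2 := ae_all_iff.2 hb_bound
  filter_upwards [hconv, hb_all, hΔ_event] with ω hMω hbω hΔω
  obtain ⟨ℓ, hl⟩ := hMω
  set D : ℕ → ℝ := fun n => ℓ - M n ω with hD_def
  have hDlim : Tendsto D atTop (nhds 0) := by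
    have := hl.const_sub ℓ
    simpa [hD_def] using this
  set c : ℕ → ℝ := fun n => b n ω + Δ n ω with hc_def
  have hclim : Tendsto c atTop (nhds 0) := by
    apply squeeze_zero_norm' (a := fun n => C₀ * (δ n) ^ 2)
    · filter_upwards [hΔω] with n hn
      simp only [hc_def, hn, add_zero, Real.norm_eq_abs]
      exact hbω n
    · have hδ2 : Tendsto (fun n => (δ n) ^ 2) atTop (nhds 0) := by
        have := hδ_lim.mul hδ_lim
        simpa [sq] using this
      have := hδ2.const_mul C₀
      simpa using this
  set y : ℕ → ℝ := fun n => θseq n ω - D n with hy_def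
  have hyrec : ∀ n, y (n + 1) = y n - a n * (f' (y n + D n) + c n) := by
    intro n
    have hDd : D n - D (n + 1) = a n * η n ω := by
      simp only [hD_def]
      rw [hMsucc n]
      simp [smul_eq_mul]
    have harg : y n + D n = θseq n ω := by simp [hy_def]
    simp only [hy_def, hc_def, harg]
    rw [hrec n]
    have : D (n + 1) = D n - a n * η n ω := by linarith
    rw [this]
    ring
  have hydet : Tendsto y atTop (nhds θstar) :=
    kw_det f' K hLipK θstar L r hr hzero hdrift_pos hdrift_neg a D c ha_pos ha0 ha_div
      hDlim hclim y hyrec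
  have : Tendsto (fun n => y n + D n) atTop (nhds (θstar + 0)) := hydet.add hDlim
  simp only [add_zero] at this
  have heq : ∀ n, y n + D n = θseq n ω := fun n => by simp [hy_def]
  simpa [heq] using this
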